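/- For every t ≥ 1, the element 2^(t-1)(1+i+j+k) in ℤ_{2^t}[i,j,k] annihilates every zero divisor: if z is a zero divisor of ℤ_{2^t}[i,j,k], then 2^(t-1)(1+i+j+k)·z = 0. Consequently the domination number of the undirected zero divisor graph of ℤ_{2^t}[i,j,k] is 1. -/

import Mathlib

open Quaternion

private lemma quat_mul_eq_zero_aux {R : Type*} [CommRing R] (c a b d e : R)
    (h2 : 2 * c = 0) (hs : c * (a + b + d + e) = 0) :
    (⟨c, c, c, c⟩ : Quaternion R) * ⟨a, b, d, e⟩ = 0 := by
  ext
  · simp only [QuaternionAlgebra.re_mul, QuaternionAlgebra.re_zero]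
    linear_combination hs + (-b - d - e) * h2
  · simp only [QuaternionAlgebra.imI_mul, QuaternionAlgebra.imI_zero]
    linear_combination hs - d * h2
  · simp only [QuaternionAlgebra.imJ_mul, QuaternionAlgebra.imJ_zero]
    linear_combination hs - e * h2
  · simp only [QuaternionAlgebra.imK_mul, QuaternionAlgebra.imK_zero]
    linear_combination hs - b * h2

/-- For t ≥ 1, the element e = 2^(t-1)(1+i+j+k) of ℤ_{2^t}[i,j,k] is a nonzero zero divisor
which annihilates every zero divisor z (i.e. e·z = 0). Consequently the domination number of
the undirected zero divisor graph of ℤ_{2^t}[i,j,k] is 1. -/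
theorem domination_number_one_quaternion (t : ℕ) (ht : 1 ≤ t) :
    let e : Quaternion (ZMod (2 ^ t)) := (2 ^ (t - 1) : ZMod (2 ^ t)) • (⟨1, 1, 1, 1⟩ : Quaternion (ZMod (2 ^ t)))
    e ≠ 0 ∧
    (∃ w : Quaternion (ZMod (2 ^ t)), w ≠ 0 ∧ (e * w = 0 ∨ w * e = 0)) ∧
    (∀ z : Quaternion (ZMod (2 ^ t)),
      (z = 0 ∨ ∃ w : Quaternion (ZMod (2 ^ t)), w ≠ 0 ∧ (z * w = 0 ∨ w * z = 0)) →
      e * z = 0) := by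
  intro e
  haveI : NeZero (2 ^ t) := ⟨pow_ne_zero t two_ne_zero⟩
  set c : ZMod (2 ^ t) := (2 : ZMod (2 ^ t)) ^ (t - 1) with hc
  have h2 : (2 : ZMod (2 ^ t)) * c = 0 := by
    have h2t : ((2 ^ t : ℕ) : ZMod (2 ^ t)) = 0 := ZMod.natCast_self _
    push_cast at h2t
    calc (2 : ZMod (2 ^ t)) * c = 2 ^ (t - 1 + 1) := by rw [hc, pow_succ]; ring
      _ = 2 ^ t := by congr 1; omega
      _ = 0 := h2t
  have he : e = (⟨c, c, c, c⟩ : Quaternion (ZMod (2 ^ t))) := by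
    show c • (⟨1, 1, 1, 1⟩ : Quaternion (ZMod (2 ^ t))) = _
    rw [QuaternionAlgebra.ext_iff]
    refine ⟨?_, ?_, ?_, ?_⟩ <;> simp
  have hcne : c ≠ 0 := by
    have hcast : c = ((2 ^ (t - 1) : ℕ) : ZMod (2 ^ t)) := by rw [hc]; push_cast; rfl
    rw [hcast, Ne, ZMod.natCast_eq_zero_iff]
    intro hdvd
    have h1 := Nat.le_of_dvd (by positivity) hdvd
    have hlt : (2 : ℕ) ^ (t - 1) < 2 ^ t := Nat.pow_lt_pow_right one_lt_two (by omega)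
    omega
  -- key computational fact
  have hkey : ∀ z : Quaternion (ZMod (2 ^ t)),
      c * (z.re + z.imI + z.imJ + z.imK) = 0 → e * z = 0 := by
    intro z hs
    rw [he]
    have : z = ⟨z.re, z.imI, z.imJ, z.imK⟩ := rfl
    rw [this]
    exact quat_mul_eq_zero_aux c _ _ _ _ h2 hs
  -- mod-2 machinery
  have hdvd2 : (2 : ℕ) ∣ 2 ^ t := dvd_pow_self 2 (by omega)
  set φ : ZMod (2 ^ t) →+* ZMod 2 := ZMod.castHom hdvd2 (ZMod 2) with hφ
  have hφval : ∀ x : ZMod (2 ^ t), φ x = ((x.val : ℕ) : ZMod 2) := by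
    intro x
    rw [hφ, ZMod.castHom_apply, ← ZMod.natCast_val]
  have hA : ∀ x : ZMod (2 ^ t), φ x = 0 → c * x = 0 := by
    intro x hx
    rw [hφval, ZMod.natCast_eq_zero_iff] at hx
    obtain ⟨m, hm⟩ := hx
    have hxval : ((x.val : ℕ) : ZMod (2 ^ t)) = x := by
      rw [ZMod.natCast_val, ZMod.cast_id]
    calc c * x = c * ((x.val : ℕ) : ZMod (2 ^ t)) := by rw [hxval]
      _ = c * ((2 * m : ℕ) : ZMod (2 ^ t)) := by rw [hm]
      _ = 0 := by push_cast; linear_combination (m : ZMod (2 ^ t)) * h2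
  have hunit : ∀ x : ZMod (2 ^ t), φ x ≠ 0 → IsUnit x := by
    intro x hx
    rw [hφval] at hx
    have h2x : ¬ (2 ∣ x.val) := fun h =>
      hx ((ZMod.natCast_eq_zero_iff _ _).mpr h)
    have hcop : Nat.Coprime x.val (2 ^ t) :=
      (((Nat.Prime.coprime_iff_not_dvd Nat.prime_two).mpr h2x).symm).pow_right t
    have := (ZMod.isUnit_iff_coprime x.val (2 ^ t)).mpr hcop
    rwa [ZMod.natCast_val, ZMod.cast_id] at this
  have hsq : ∀ y : ZMod 2, y ^ 2 = y := by decide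
  -- main annihilation statement
  have hmain : ∀ z : Quaternion (ZMod (2 ^ t)),
      (z = 0 ∨ ∃ w : Quaternion (ZMod (2 ^ t)), w ≠ 0 ∧ (z * w = 0 ∨ w * z = 0)) →
      e * z = 0 := by
    intro z hz
    rcases hz with rfl | ⟨w, hw, hzw⟩
    · exact mul_zero e
    apply hkey
    apply hA
    have heq : φ (z.re + z.imI + z.imJ + z.imK) = φ (normSq z) := by
      rw [Quaternion.normSq_def']
      simp only [map_add, map_pow, hsq]
    rw [heq]
    by_contra hne
    obtain ⟨u, hu⟩ := hunit _ hne
    have hw0 : (normSq z : ZMod (2 ^ t)) • w = 0 := by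
      rcases hzw with h | h
      · have h' : (star z * z) * w = 0 := by rw [mul_assoc, h, mul_zero]
        rwa [Quaternion.star_mul_self, Quaternion.coe_mul_eq_smul] at h'
      · have h' : w * (z * star z) = 0 := by rw [← mul_assoc, h, zero_mul]
        rwa [Quaternion.self_mul_star, Quaternion.mul_coe_eq_smul] at h'
    apply hw
    calc w = ((u⁻¹ : (ZMod (2 ^ t))ˣ) : ZMod (2 ^ t)) • (((u : (ZMod (2 ^ t))ˣ) : ZMod (2 ^ t)) • w) := by
          rw [smul_smul, ← Units.val_mul, inv_mul_cancel, Units.val_one, one_smul]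
      _ = 0 := by rw [hu, hw0, smul_zero]
  refine ⟨?_, ?_, hmain⟩
  · intro h0
    apply hcne
    have : e.re = c := by rw [he]
    rw [h0] at this
    exact this.symm
  · refine ⟨e, ?_, Or.inl ?_⟩
    · intro h0
      apply hcne
      have : e.re = c := by rw [he]
      rw [h0] at this
      exact this.symm
    · apply hkey
      have : e.re + e.imI + e.imJ + e.imK = c + c + c + c := by rw [he]
      rw [this]
      linear_combination 2 * c * h2
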